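/- arXiv:2207.08263 — 2 statements merged into one kernel-verified Lean document; each statement's English description precedes it below -/
import Mathlib

section
/- Let n, m ∈ ℤ and λ ∈ ℝ. Let y, q, r : (0,∞) → ℂ be functions such that y is twice differentiable and q is differentiable, and suppose that for all t > 0: (i) t q(t) = i(m−n) y(t) − t² y′(t); (ii) i m q(t) = i n q(t) − 4 y′(t) + 2 i n y(t) + t² q′(t) + t r(t); (iii) 4λ y(t) = −4 y″(t) + 4 i n y′(t) + 2 q(t) − r(t). Then for all t > 0, (t³ + 4t) y″(t) + (3t² + 4) y′(t) + 4λ t y(t) = 2 i (m+n) t y′(t) + i (m+n) y(t) + (m−n)² y(t)/t. -/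
open Set

/-- The computational core of Proposition 2.3: the second-order ODE satisfied by
matrix coefficients of the horocycle flow. -/
theorem matrix_coefficient_ODE
    (n m : ℤ) (lam : ℝ) (y y' y'' q q' r : ℝ → ℂ)
    (hy : ∀ t ∈ Set.Ioi (0:ℝ), HasDerivAt y (y' t) t)
    (hy' : ∀ t ∈ Set.Ioi (0:ℝ), HasDerivAt y' (y'' t) t)
    (hq : ∀ t ∈ Set.Ioi (0:ℝ), HasDerivAt q (q' t) t)
    (h1 : ∀ t ∈ Set.Ioi (0:ℝ),
      (t : ℂ) * q t = Complex.I * ((m : ℂ) - (n : ℂ)) * y t - (t : ℂ) ^ 2 * y' t)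
    (h2 : ∀ t ∈ Set.Ioi (0:ℝ),
      Complex.I * (m : ℂ) * q t = Complex.I * (n : ℂ) * q t - 4 * y' t
        + 2 * Complex.I * (n : ℂ) * y t + (t : ℂ) ^ 2 * q' t + (t : ℂ) * r t)
    (h3 : ∀ t ∈ Set.Ioi (0:ℝ),
      4 * (lam : ℂ) * y t = -4 * y'' t + 4 * Complex.I * (n : ℂ) * y' t
        + 2 * q t - r t) :
    ∀ t ∈ Set.Ioi (0:ℝ),
      ((t : ℂ) ^ 3 + 4 * (t : ℂ)) * y'' t + (3 * (t : ℂ) ^ 2 + 4) * y' t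
          + 4 * (lam : ℂ) * (t : ℂ) * y t
        = 2 * Complex.I * ((m : ℂ) + (n : ℂ)) * (t : ℂ) * y' t
          + Complex.I * ((m : ℂ) + (n : ℂ)) * y t
          + ((m : ℂ) - (n : ℂ)) ^ 2 * y t / (t : ℂ) := by
  intro t ht
  have ht0 : (0:ℝ) < t := ht
  have htne : (t:ℂ) ≠ 0 := by
    exact_mod_cast Complex.ofReal_ne_zero.mpr (ne_of_gt ht0)
  -- derivative of t * q t
  have hco : HasDerivAt (fun s : ℝ => (s : ℂ)) 1 t := by
    simpa using (hasDerivAt_id t).ofReal_comp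
  have hF : HasDerivAt (fun s : ℝ => (s:ℂ) * q s) (1 * q t + (t:ℂ) * q' t) t :=
    hco.mul (hq t ht)
  have hG : HasDerivAt
      (fun s : ℝ => Complex.I * ((m:ℂ) - (n:ℂ)) * y s - (s:ℂ) ^ 2 * y' s)
      (Complex.I * ((m:ℂ) - (n:ℂ)) * y' t
        - (2 * (t:ℂ) * y' t + (t:ℂ) ^ 2 * y'' t)) t := by
    have hsq : HasDerivAt (fun s : ℝ => (s:ℂ) ^ 2) (2 * (t:ℂ)) t := by
      exact (hco.pow 2).congr_deriv (by ring)
    have := ((hasDerivAt_const t (Complex.I * ((m:ℂ) - (n:ℂ)))).mul (hy t ht)).sub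
      (hsq.mul (hy' t ht))
    exact this.congr_deriv (by ring)
  have heq : (fun s : ℝ => (s:ℂ) * q s) =ᶠ[nhds t]
      (fun s : ℝ => Complex.I * ((m:ℂ) - (n:ℂ)) * y s - (s:ℂ) ^ 2 * y' s) := by
    filter_upwards [isOpen_Ioi.mem_nhds ht] with s hs using h1 s hs
  have e4 : 1 * q t + (t:ℂ) * q' t
      = Complex.I * ((m:ℂ) - (n:ℂ)) * y' t
        - (2 * (t:ℂ) * y' t + (t:ℂ) ^ 2 * y'' t) :=
    hF.unique (hG.congr_of_eventuallyEq heq)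
  have e1 := h1 t ht
  have e2 := h2 t ht
  have e3 := h3 t ht
  field_simp
  linear_combination ((t:ℂ)^2) * e3 + ((t:ℂ)^2) * e4 + (t:ℂ) * e2
    + ((t:ℂ) - Complex.I * ((m:ℂ) - (n:ℂ))) * e1
    - ((m:ℂ) - (n:ℂ))^2 * y t * Complex.I_sq
end

section
/- Let ν ∈ (0,1), set λ = (1−ν²)/4, let K > 0, and let f : (0,∞) → ℂ be continuous with |f(t)| ≤ K for 0 < t ≤ 1 and |f(t)| ≤ K/t for t ≥ 1. Define y : (0,∞) → ℂ by y(t) = −(t^{−1+ν}/(2ν)) ∫_t^∞ r^{−ν} f(r) dr − (t^{−1−ν}/(2ν)) ∫_0^t r^{ν} f(r) dr, and define A = −(1/(2ν)) ∫_1^∞ r^{−ν} f(r) dr. Then for all t ≥ 1, |y(t) − A t^{−1+ν}| ≤ 2 K ν^{−2} t^{−1+ν}. -/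
open MeasureTheory Set

/-- Leading asymptotics of the variation-of-parameters solution (Lemma 2.4). -/
theorem leading_asymptotics_of_solution
    (ν : ℝ) (hν : ν ∈ Set.Ioo (0:ℝ) 1) (lam : ℝ) (hlam : lam = (1 - ν ^ 2) / 4)
    (K : ℝ) (hK : 0 < K) (f : ℝ → ℂ) (hf : ContinuousOn f (Set.Ioi 0))
    (hf1 : ∀ t : ℝ, 0 < t → t ≤ 1 → ‖f t‖ ≤ K)
    (hf2 : ∀ t : ℝ, 1 ≤ t → ‖f t‖ ≤ K / t)
    (y : ℝ → ℂ)
    (hy : ∀ t ∈ Set.Ioi (0:ℝ), y t =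
      -(((t ^ (-1 + ν) / (2 * ν) : ℝ)) : ℂ) *
          (∫ r in Set.Ioi t, ((r ^ (-ν) : ℝ) : ℂ) * f r)
        - (((t ^ (-1 - ν) / (2 * ν) : ℝ)) : ℂ) *
          (∫ r in Set.Ioc (0:ℝ) t, ((r ^ ν : ℝ) : ℂ) * f r))
    (A : ℂ)
    (hA : A = -((1 / (2 * ν) : ℝ) : ℂ) *
      ∫ r in Set.Ioi (1:ℝ), ((r ^ (-ν) : ℝ) : ℂ) * f r) :
    ∀ t : ℝ, 1 ≤ t →
      ‖y t - A * ((t ^ (-1 + ν) : ℝ) : ℂ)‖ ≤ 2 * K / ν ^ 2 * t ^ (-1 + ν) := by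
  obtain ⟨hν0, hν1⟩ := hν
  intro t ht
  have ht0 : (0:ℝ) < t := lt_of_lt_of_le one_pos ht
  set g1 : ℝ → ℂ := fun r => ((r ^ (-ν) : ℝ) : ℂ) * f r with hg1
  set g2 : ℝ → ℂ := fun r => ((r ^ ν : ℝ) : ℂ) * f r with hg2
  -- continuity
  have hcont1 : ContinuousOn g1 (Set.Ioi 0) := by
    apply ContinuousOn.mul _ hf
    exact Complex.continuous_ofReal.comp_continuousOn
      (continuousOn_id.rpow_const (fun x hx => Or.inl (ne_of_gt hx)))
  have hcont2 : ContinuousOn g2 (Set.Ioi 0) := by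
    apply ContinuousOn.mul _ hf
    exact Complex.continuous_ofReal.comp_continuousOn
      (continuousOn_id.rpow_const (fun x hx => Or.inl (ne_of_gt hx)))
  -- norm formulas
  have hn1 : ∀ r : ℝ, 0 < r → ‖g1 r‖ = r ^ (-ν) * ‖f r‖ := by
    intro r hr
    simp [hg1, norm_mul, Complex.norm_real, abs_of_nonneg (Real.rpow_nonneg hr.le _)]
  have hn2 : ∀ r : ℝ, 0 < r → ‖g2 r‖ = r ^ ν * ‖f r‖ := by
    intro r hr
    simp [hg2, norm_mul, Complex.norm_real, abs_of_nonneg (Real.rpow_nonneg hr.le _)]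
  -- pointwise bound on Ioi 1 for g1
  have hb1 : ∀ r : ℝ, 1 ≤ r → ‖g1 r‖ ≤ K * r ^ (-1 - ν) := by
    intro r hr
    have hr0 : (0:ℝ) < r := lt_of_lt_of_le one_pos hr
    rw [hn1 r hr0]
    calc r ^ (-ν) * ‖f r‖ ≤ r ^ (-ν) * (K / r) :=
          mul_le_mul_of_nonneg_left (hf2 r hr) (Real.rpow_nonneg hr0.le _)
      _ = K * r ^ (-1 - ν) := by
          rw [show (-1 - ν) = -ν + -1 by ring, Real.rpow_add hr0, Real.rpow_neg_one]
          field_simp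
  -- pointwise bound on Ioi 1 for g2
  have hb2 : ∀ r : ℝ, 1 ≤ r → ‖g2 r‖ ≤ K * r ^ (ν - 1) := by
    intro r hr
    have hr0 : (0:ℝ) < r := lt_of_lt_of_le one_pos hr
    rw [hn2 r hr0]
    calc r ^ ν * ‖f r‖ ≤ r ^ ν * (K / r) :=
          mul_le_mul_of_nonneg_left (hf2 r hr) (Real.rpow_nonneg hr0.le _)
      _ = K * r ^ (ν - 1) := by
          rw [show (ν - 1) = ν + -1 by ring, Real.rpow_add hr0, Real.rpow_neg_one]
          field_simp
  -- integrability of g1 on Ioi 1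
  have hIb1 : IntegrableOn (fun r : ℝ => K * r ^ (-1 - ν)) (Set.Ioi 1) :=
    (integrableOn_Ioi_rpow_of_lt (a := -1 - ν) (by linarith) one_pos).const_mul K
  have hI1 : IntegrableOn g1 (Set.Ioi 1) := by
    have hmeas : AEStronglyMeasurable g1 (volume.restrict (Set.Ioi 1)) :=
      (hcont1.mono (Set.Ioi_subset_Ioi zero_le_one)).aestronglyMeasurable measurableSet_Ioi
    refine Integrable.mono' hIb1 hmeas ?_
    filter_upwards [ae_restrict_mem measurableSet_Ioi] with r hr
    exact hb1 r (le_of_lt hr)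
  have hI1t : IntegrableOn g1 (Set.Ioi t) := hI1.mono_set (Set.Ioi_subset_Ioi ht)
  have hI1c : IntegrableOn g1 (Set.Ioc 1 t) := hI1.mono_set Set.Ioc_subset_Ioi_self
  -- integrability of g2
  have hI2a : IntegrableOn g2 (Set.Ioc 0 1) := by
    have hmeas : AEStronglyMeasurable g2 (volume.restrict (Set.Ioc 0 1)) :=
      (hcont2.mono Set.Ioc_subset_Ioi_self).aestronglyMeasurable measurableSet_Ioc
    refine Integrable.mono' (g := fun _ => K) (integrableOn_const measure_Ioc_lt_top.ne) hmeas ?_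
    filter_upwards [ae_restrict_mem measurableSet_Ioc] with r hr
    rw [hn2 r hr.1]
    calc r ^ ν * ‖f r‖ ≤ 1 * K :=
          mul_le_mul (Real.rpow_le_one hr.1.le hr.2 hν0.le) (hf1 r hr.1 hr.2)
            (norm_nonneg _) zero_le_one
      _ = K := one_mul K
  have hI2b : IntegrableOn g2 (Set.Ioc 1 t) := by
    have hsub : Set.Ioc (1:ℝ) t ⊆ Set.Ioi 0 := fun x hx => lt_trans one_pos hx.1
    have hmeas : AEStronglyMeasurable g2 (volume.restrict (Set.Ioc 1 t)) :=
      (hcont2.mono hsub).aestronglyMeasurable measurableSet_Ioc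
    refine Integrable.mono' (g := fun _ => K) (integrableOn_const measure_Ioc_lt_top.ne) hmeas ?_
    filter_upwards [ae_restrict_mem measurableSet_Ioc] with r hr
    have hr0 : (0:ℝ) < r := lt_trans one_pos hr.1
    calc ‖g2 r‖ ≤ K * r ^ (ν - 1) := hb2 r hr.1.le
      _ ≤ K * 1 := by
          refine mul_le_mul_of_nonneg_left ?_ hK.le
          exact Real.rpow_le_one_of_one_le_of_nonpos hr.1.le (by linarith)
      _ = K := mul_one K
  have hI2 : IntegrableOn g2 (Set.Ioc 0 t) := by
    have h : Set.Ioc (0:ℝ) t = Set.Ioc 0 1 ∪ Set.Ioc 1 t :=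
      (Set.Ioc_union_Ioc_eq_Ioc zero_le_one ht).symm
    rw [h]
    exact hI2a.union hI2b
  -- splitting of the Ioi 1 integral
  have hsplit : (∫ r in Set.Ioi (1:ℝ), g1 r)
      = (∫ r in Set.Ioc 1 t, g1 r) + ∫ r in Set.Ioi t, g1 r := by
    rw [← setIntegral_union (Set.Ioc_disjoint_Ioi le_rfl) measurableSet_Ioi hI1c hI1t,
      Set.Ioc_union_Ioi_eq_Ioi ht]
  -- main identity
  have hid : y t - A * ((t ^ (-1 + ν) : ℝ) : ℂ) =
      (((t ^ (-1 + ν) / (2 * ν) : ℝ)) : ℂ) * (∫ r in Set.Ioc 1 t, g1 r)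
        - (((t ^ (-1 - ν) / (2 * ν) : ℝ)) : ℂ) * (∫ r in Set.Ioc (0:ℝ) t, g2 r) := by
    rw [hy t (Set.mem_Ioi.2 ht0), hA, hsplit]
    push_cast
    ring
  -- bound on the first integral
  have hB1 : ‖∫ r in Set.Ioc 1 t, g1 r‖ ≤ K / ν := by
    calc ‖∫ r in Set.Ioc 1 t, g1 r‖ ≤ ∫ r in Set.Ioc 1 t, ‖g1 r‖ :=
          norm_integral_le_integral_norm _
      _ ≤ ∫ r in Set.Ioc 1 t, K * r ^ (-1 - ν) :=
          setIntegral_mono_on hI1c.norm (hIb1.mono_set Set.Ioc_subset_Ioi_self)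
            measurableSet_Ioc (fun r hr => hb1 r hr.1.le)
      _ = K * ∫ r in Set.Ioc 1 t, r ^ (-1 - ν) := by rw [integral_const_mul]
      _ ≤ K / ν := by
          rw [← intervalIntegral.integral_of_le ht,
            integral_rpow (Or.inr ⟨by intro h; linarith,
              by simp [Set.uIcc_of_le ht]⟩)]
          have he : (-1 - ν) + 1 = -ν := by ring
          rw [he, Real.one_rpow]
          have h1 : t ^ (-ν) ≤ 1 := Real.rpow_le_one_of_one_le_of_nonpos ht (by linarith)
          have h2 : (0:ℝ) ≤ t ^ (-ν) := Real.rpow_nonneg ht0.le _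
          calc K * ((t ^ (-ν) - 1) / (-ν)) = K * ((1 - t ^ (-ν)) / ν) := by
                rw [div_neg, ← neg_div, neg_sub]
            _ ≤ K * (1 / ν) := by gcongr; linarith
            _ = K / ν := by ring
  -- bound on the Ioc 0 1 part of the second integral
  have hB2a : ‖∫ r in Set.Ioc (0:ℝ) 1, g2 r‖ ≤ K := by
    have h : ‖∫ r in Set.Ioc (0:ℝ) 1, g2 r‖ ≤ K * (volume (Set.Ioc (0:ℝ) 1)).toReal := by
      refine norm_setIntegral_le_of_norm_le_const measure_Ioc_lt_top ?_
      intro r hr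
      rw [hn2 r hr.1]
      calc r ^ ν * ‖f r‖ ≤ 1 * K :=
            mul_le_mul (Real.rpow_le_one hr.1.le hr.2 hν0.le) (hf1 r hr.1 hr.2)
              (norm_nonneg _) zero_le_one
        _ = K := one_mul K
    simpa using h
  -- bound on the Ioc 1 t part of the second integral
  have hIb2 : IntegrableOn (fun r : ℝ => K * r ^ (ν - 1)) (Set.Ioc 1 t) := by
    have hc : ContinuousOn (fun r : ℝ => K * r ^ (ν - 1)) (Set.Icc 1 t) := by
      apply continuousOn_const.mul
      exact continuousOn_id.rpow_const
        (fun x hx => Or.inl (ne_of_gt (lt_of_lt_of_le one_pos hx.1)))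
    exact (hc.integrableOn_Icc).mono_set Set.Ioc_subset_Icc_self
  have hB2b : ‖∫ r in Set.Ioc 1 t, g2 r‖ ≤ K * t ^ ν / ν := by
    calc ‖∫ r in Set.Ioc 1 t, g2 r‖ ≤ ∫ r in Set.Ioc 1 t, ‖g2 r‖ :=
          norm_integral_le_integral_norm _
      _ ≤ ∫ r in Set.Ioc 1 t, K * r ^ (ν - 1) :=
          setIntegral_mono_on hI2b.norm hIb2 measurableSet_Ioc (fun r hr => hb2 r hr.1.le)
      _ = K * ∫ r in Set.Ioc 1 t, r ^ (ν - 1) := by rw [integral_const_mul]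
      _ ≤ K * t ^ ν / ν := by
          rw [← intervalIntegral.integral_of_le ht, integral_rpow (Or.inl (by linarith))]
          have he : (ν - 1) + 1 = ν := by ring
          rw [he, Real.one_rpow]
          have h1 : (1:ℝ) ≤ t ^ ν := Real.one_le_rpow ht hν0.le
          rw [mul_div_assoc]
          gcongr
          linarith
  -- split of the second integral
  have hsplit2 : (∫ r in Set.Ioc (0:ℝ) t, g2 r)
      = (∫ r in Set.Ioc (0:ℝ) 1, g2 r) + ∫ r in Set.Ioc 1 t, g2 r := by
    have hd : Disjoint (Set.Ioc (0:ℝ) 1) (Set.Ioc 1 t) := by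
      rw [Set.disjoint_left]
      rintro x ⟨_, h1⟩ ⟨h2, _⟩
      exact absurd h1 (not_le.2 h2)
    rw [← setIntegral_union hd measurableSet_Ioc hI2a hI2b,
      Set.Ioc_union_Ioc_eq_Ioc zero_le_one ht]
  have hB2 : ‖∫ r in Set.Ioc (0:ℝ) t, g2 r‖ ≤ K + K * t ^ ν / ν := by
    rw [hsplit2]
    exact le_trans (norm_add_le _ _) (add_le_add hB2a hB2b)
  -- put everything together
  rw [hid]
  have hnorm : ‖(((t ^ (-1 + ν) / (2 * ν) : ℝ)) : ℂ) * (∫ r in Set.Ioc 1 t, g1 r)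
        - (((t ^ (-1 - ν) / (2 * ν) : ℝ)) : ℂ) * (∫ r in Set.Ioc (0:ℝ) t, g2 r)‖
      ≤ (t ^ (-1 + ν) / (2 * ν)) * (K / ν)
        + (t ^ (-1 - ν) / (2 * ν)) * (K + K * t ^ ν / ν) := by
    refine le_trans (norm_sub_le _ _) (add_le_add ?_ ?_)
    · rw [norm_mul, Complex.norm_real, Real.norm_eq_abs,
        abs_of_nonneg (by positivity)]
      exact mul_le_mul_of_nonneg_left hB1 (by positivity)
    · rw [norm_mul, Complex.norm_real, Real.norm_eq_abs,
        abs_of_nonneg (by positivity)]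
      refine mul_le_mul_of_nonneg_left hB2 (by positivity)
  refine le_trans hnorm ?_
  -- final arithmetic
  have hba : t ^ (-1 - ν) ≤ t ^ (-1 + ν) :=
    Real.rpow_le_rpow_of_exponent_le ht (by linarith)
  have hbc : t ^ (-1 - ν) * t ^ ν = t ^ (-1 : ℝ) := by
    rw [← Real.rpow_add ht0]; ring_nf
  have hda : t ^ (-1 : ℝ) ≤ t ^ (-1 + ν) :=
    Real.rpow_le_rpow_of_exponent_le ht (by linarith)
  have hb0 : (0:ℝ) ≤ t ^ (-1 - ν) := Real.rpow_nonneg ht0.le _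
  have ha0 : (0:ℝ) < t ^ (-1 + ν) := Real.rpow_pos_of_pos ht0 _
  set a := t ^ (-1 + ν)
  set b := t ^ (-1 - ν)
  set d := t ^ (-1 : ℝ)
  have key : a / (2 * ν) * (K / ν) + b / (2 * ν) * (K + K * t ^ ν / ν)
      = K * a / (2 * ν ^ 2) + (K * b / (2 * ν) + K * d / (2 * ν ^ 2)) := by
    rw [← hbc]
    field_simp
  rw [key]
  have h1 : K * a / (2 * ν ^ 2) ≤ K * a / (2 * ν ^ 2) := le_rfl
  have h2 : K * b / (2 * ν) ≤ K * a / (2 * ν ^ 2) := by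
    calc K * b / (2 * ν) ≤ K * a / (2 * ν) := by gcongr
      _ ≤ K * a / (2 * ν ^ 2) := by
          apply div_le_div_of_nonneg_left (by positivity) (by positivity)
          nlinarith
  have h3 : K * d / (2 * ν ^ 2) ≤ K * a / (2 * ν ^ 2) := by gcongr
  have h4 : 3 * (K * a / (2 * ν ^ 2)) ≤ 2 * K / ν ^ 2 * a := by
    rw [show 2 * K / ν ^ 2 * a = 4 * (K * a / (2 * ν ^ 2)) by field_simp; ring]
    have : (0:ℝ) ≤ K * a / (2 * ν ^ 2) := by positivity
    linarith
  linarith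
end
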